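/- Let d ≥ 3 and c ∈ ℝ, let ξ be a 1-form and H an alternating 3-form on V with tangential–normal decompositions ξ = ξ∥ − x·N♭ and H = H∥ − N♭ ∧ h (all tangential parts annihilated by i_N, so x = ξ(N)). Define T := (1/(d−2))·[ξ⊗ξ − (|ξ|²_g/2)·g] + (c/4)·[H² − (|H|²_g/6)·g]. Then T(N,N) = (1/(2(d−2)))·(|ξ∥|²_{g_W} + x²) + (c/24)·(|H∥|²_{g_W} + 3|h|²_{g_W}). (This is the algebraic content of the Hamiltonian constraint of the Einstein-frame generalised Einstein equations.) -/

import Mathlib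

open scoped BigOperators

namespace GEE

/-- Components (in a fixed basis) of a covariant `k`-tensor on a `d`-dimensional
real vector space. -/
abbrev Tensor (d k : ℕ) : Type := (Fin k → Fin d) → ℝ

/-- The component tensor `ω` is alternating (totally antisymmetric). -/
def IsAlt {d k : ℕ} (ω : Tensor d k) : Prop :=
  ∀ (v : Fin k → Fin d) (σ : Equiv.Perm (Fin k)),
    ω (v ∘ σ) = ((Equiv.Perm.sign σ : ℤ) : ℝ) * ω v

/-- The Minkowski matrix `diag(-1, 1, …, 1)`. -/
def mink (d : ℕ) : Matrix (Fin d) (Fin d) ℝ :=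
  Matrix.diagonal fun i => if (i : ℕ) = 0 then (-1 : ℝ) else 1

/-- `g` is a symmetric bilinear form of Lorentzian signature `(−,+,…,+)`. -/
def IsLorentzian {d : ℕ} (g : Matrix (Fin d) (Fin d) ℝ) : Prop :=
  g.IsSymm ∧ ∃ P : Matrix (Fin d) (Fin d) ℝ, IsUnit P.det ∧ g = P.transpose * mink d * P

/-- Evaluation of a bilinear form (given by its component matrix `A`) on two vectors. -/
def evalBilin {d : ℕ} (A : Matrix (Fin d) (Fin d) ℝ) (X Y : Fin d → ℝ) : ℝ :=
  ∑ μ, ∑ ν, X μ * A μ ν * Y ν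

/-- Interior product `i_N ω`: contraction of the first slot of `ω` with the vector `N`. -/
def iprod {d k : ℕ} (N : Fin d → ℝ) (ω : Tensor d (k + 1)) : Tensor d k :=
  fun v => ∑ μ, N μ * ω (Fin.cons μ v)

/-- `ω` is tangential: contracting `N` into any slot yields zero.  For alternating
tensors this is equivalent to `i_N ω = 0` (vanishing of the first-slot contraction),
and for `k = 0` the condition is vacuous. -/
def Tangential {d k : ℕ} (N : Fin d → ℝ) (ω : Tensor d k) : Prop :=
  ∀ (i : Fin k) (v : Fin k → Fin d), ∑ μ, N μ * ω (Function.update v i μ) = 0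

/-- The flat `N♭ = g(N,·)` of a vector `N`, i.e. `(N♭)_μ = g_{μν} N^ν`. -/
def flat {d : ℕ} (g : Matrix (Fin d) (Fin d) ℝ) (N : Fin d → ℝ) : Fin d → ℝ :=
  fun μ => ∑ ν, g μ ν * N ν

/-- Wedge product `α ∧ w` of a 1-form `α` with a `k`-form `w`, in components. -/
def wedge1 {d k : ℕ} (α : Fin d → ℝ) (w : Tensor d k) : Tensor d (k + 1) :=
  fun v => ∑ i : Fin (k + 1), (-1 : ℝ) ^ (i : ℕ) * α (v i) * w (v ∘ i.succAbove)

/-- Full contraction `|ω|² = ω_{μ₁…μ_k} ω^{μ₁…μ_k}`, all indices raised with `minv`. -/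
def normSq {d k : ℕ} (minv : Matrix (Fin d) (Fin d) ℝ) (ω : Tensor d k) : ℝ :=
  ∑ v : Fin k → Fin d, ∑ w : Fin k → Fin d, (∏ i, minv (v i) (w i)) * ω v * ω w

/-- `|α|² = minv^{μν} α_μ α_ν` for a 1-form `α`. -/
def oneNormSq {d : ℕ} (minv : Matrix (Fin d) (Fin d) ℝ) (α : Fin d → ℝ) : ℝ :=
  ∑ μ, ∑ ν, minv μ ν * α μ * α ν

/-- The inverse of the induced Riemannian metric `g_W` on `W = N^⊥` (for a unit
timelike `N`), pushed forward to the ambient space: `g_W^{μν} = g^{μν} + N^μ N^ν`.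
Contracting tangential tensors with this matrix computes their full `g_W`-contraction. -/
noncomputable def ginvW {d : ℕ} (g : Matrix (Fin d) (Fin d) ℝ) (N : Fin d → ℝ) :
    Matrix (Fin d) (Fin d) ℝ :=
  g⁻¹ + Matrix.vecMulVec N N

/-- `H²_{μν} = ginv^{κλ} ginv^{ωπ} H_{μκω} H_{νλπ}` for a 3-form `H`. -/
def Hsq {d : ℕ} (ginv : Matrix (Fin d) (Fin d) ℝ) (H : Tensor d 3) :
    Matrix (Fin d) (Fin d) ℝ :=
  Matrix.of fun μ ν => ∑ κ, ∑ l, ∑ o, ∑ p,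
    ginv κ l * ginv o p * H ![μ, κ, o] * H ![ν, l, p]

/-- `tr_g A = ginv^{μν} A_{μν}`. -/
def trWith {d : ℕ} (ginv A : Matrix (Fin d) (Fin d) ℝ) : ℝ :=
  ∑ μ, ∑ ν, ginv μ ν * A μ ν

/-- `C(h,H)_i = gWinv^{kl} gWinv^{mn} h_{km} H_{lni}`. -/
def Ccontr {d : ℕ} (gWinv : Matrix (Fin d) (Fin d) ℝ) (h : Tensor d 2)
    (H : Tensor d 3) : Fin d → ℝ :=
  fun i => ∑ k, ∑ l, ∑ m, ∑ n, gWinv k l * gWinv m n * h ![k, m] * H ![l, n, i]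

/-- Partial derivative `∂_μ f` at `x` of a scalar field on `ℝ^d`. -/
noncomputable def pder {d : ℕ} (μ : Fin d) (f : (Fin d → ℝ) → ℝ) (x : Fin d → ℝ) : ℝ :=
  fderiv ℝ f x (Pi.single μ 1)



theorem sum_pi3 {d : ℕ} (f : (Fin 3 → Fin d) → ℝ) :
    ∑ v : Fin 3 → Fin d, f v = ∑ a, ∑ b, ∑ c, f ![a,b,c] := by
  rw [← (Fin.consEquiv (fun _ => Fin d)).sum_comp, Fintype.sum_prod_type]
  congr 1; ext a
  rw [← (Fin.consEquiv (fun _ => Fin d)).sum_comp, Fintype.sum_prod_type]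
  congr 1; ext b
  rw [← (Fin.consEquiv (fun _ => Fin d)).sum_comp, Fintype.sum_prod_type]
  congr 1; ext c
  rw [Fintype.sum_subsingleton _ (fun i => Fin.elim0 i)]
  simp [Fin.consEquiv]
  exact congrArg f (by funext i; fin_cases i <;> rfl)

theorem sum_pi2 {d : ℕ} (f : (Fin 2 → Fin d) → ℝ) :
    ∑ v : Fin 2 → Fin d, f v = ∑ a, ∑ b, f ![a,b] := by
  rw [← (Fin.consEquiv (fun _ => Fin d)).sum_comp, Fintype.sum_prod_type]
  congr 1; ext a
  rw [← (Fin.consEquiv (fun _ => Fin d)).sum_comp, Fintype.sum_prod_type]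
  congr 1; ext b
  rw [Fintype.sum_subsingleton _ (fun i => Fin.elim0 i)]
  simp [Fin.consEquiv]
  exact congrArg f (by funext i; fin_cases i <;> rfl)

theorem sum6_rot1 {d : ℕ} (F : Fin d → Fin d → Fin d → Fin d → Fin d → Fin d → ℝ) :
    (∑ a, ∑ b, ∑ c, ∑ a', ∑ b', ∑ c', F a b c a' b' c')
      = ∑ b, ∑ c, ∑ b', ∑ c', ∑ a, ∑ a', F a b c a' b' c' := by
  calc (∑ a, ∑ b, ∑ c, ∑ a', ∑ b', ∑ c', F a b c a' b' c')
      = ∑ b, ∑ a, ∑ c, ∑ a', ∑ b', ∑ c', F a b c a' b' c' := Finset.sum_comm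
    _ = ∑ b, ∑ c, ∑ a, ∑ a', ∑ b', ∑ c', F a b c a' b' c' :=
        Finset.sum_congr rfl fun _ _ => Finset.sum_comm
    _ = ∑ b, ∑ c, ∑ a, ∑ b', ∑ a', ∑ c', F a b c a' b' c' :=
        Finset.sum_congr rfl fun _ _ => Finset.sum_congr rfl fun _ _ =>
          Finset.sum_congr rfl fun _ _ => Finset.sum_comm
    _ = ∑ b, ∑ c, ∑ b', ∑ a, ∑ a', ∑ c', F a b c a' b' c' :=
        Finset.sum_congr rfl fun _ _ => Finset.sum_congr rfl fun _ _ => Finset.sum_comm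
    _ = ∑ b, ∑ c, ∑ b', ∑ a, ∑ c', ∑ a', F a b c a' b' c' :=
        Finset.sum_congr rfl fun _ _ => Finset.sum_congr rfl fun _ _ =>
          Finset.sum_congr rfl fun _ _ => Finset.sum_congr rfl fun _ _ => Finset.sum_comm
    _ = ∑ b, ∑ c, ∑ b', ∑ c', ∑ a, ∑ a', F a b c a' b' c' :=
        Finset.sum_congr rfl fun _ _ => Finset.sum_congr rfl fun _ _ =>
          Finset.sum_congr rfl fun _ _ => Finset.sum_comm

theorem sum6_rot2 {d : ℕ} (F : Fin d → Fin d → Fin d → Fin d → Fin d → Fin d → ℝ) :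
    (∑ a, ∑ b, ∑ c, ∑ a', ∑ b', ∑ c', F a b c a' b' c')
      = ∑ a, ∑ c, ∑ a', ∑ c', ∑ b, ∑ b', F a b c a' b' c' := by
  calc (∑ a, ∑ b, ∑ c, ∑ a', ∑ b', ∑ c', F a b c a' b' c')
      = ∑ a, ∑ c, ∑ b, ∑ a', ∑ b', ∑ c', F a b c a' b' c' :=
        Finset.sum_congr rfl fun _ _ => Finset.sum_comm
    _ = ∑ a, ∑ c, ∑ a', ∑ b, ∑ b', ∑ c', F a b c a' b' c' :=
        Finset.sum_congr rfl fun _ _ => Finset.sum_congr rfl fun _ _ => Finset.sum_comm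
    _ = ∑ a, ∑ c, ∑ a', ∑ b, ∑ c', ∑ b', F a b c a' b' c' :=
        Finset.sum_congr rfl fun _ _ => Finset.sum_congr rfl fun _ _ =>
          Finset.sum_congr rfl fun _ _ => Finset.sum_congr rfl fun _ _ => Finset.sum_comm
    _ = ∑ a, ∑ c, ∑ a', ∑ c', ∑ b, ∑ b', F a b c a' b' c' :=
        Finset.sum_congr rfl fun _ _ => Finset.sum_congr rfl fun _ _ =>
          Finset.sum_congr rfl fun _ _ => Finset.sum_comm

theorem sum6_rot3 {d : ℕ} (F : Fin d → Fin d → Fin d → Fin d → Fin d → Fin d → ℝ) :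
    (∑ a, ∑ b, ∑ c, ∑ a', ∑ b', ∑ c', F a b c a' b' c')
      = ∑ a, ∑ b, ∑ a', ∑ b', ∑ c, ∑ c', F a b c a' b' c' := by
  calc (∑ a, ∑ b, ∑ c, ∑ a', ∑ b', ∑ c', F a b c a' b' c')
      = ∑ a, ∑ b, ∑ a', ∑ c, ∑ b', ∑ c', F a b c a' b' c' :=
        Finset.sum_congr rfl fun _ _ => Finset.sum_congr rfl fun _ _ => Finset.sum_comm
    _ = ∑ a, ∑ b, ∑ a', ∑ b', ∑ c, ∑ c', F a b c a' b' c' :=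
        Finset.sum_congr rfl fun _ _ => Finset.sum_congr rfl fun _ _ =>
          Finset.sum_congr rfl fun _ _ => Finset.sum_comm

theorem sum6_pair_first {d : ℕ} (F : Fin d → Fin d → Fin d → Fin d → Fin d → Fin d → ℝ) :
    (∑ x, ∑ y, ∑ k, ∑ l, ∑ o, ∑ p, F x y k l o p)
      = ∑ k, ∑ l, ∑ o, ∑ p, ∑ x, ∑ y, F x y k l o p := by
  calc (∑ x, ∑ y, ∑ k, ∑ l, ∑ o, ∑ p, F x y k l o p)
      = ∑ x, ∑ k, ∑ y, ∑ l, ∑ o, ∑ p, F x y k l o p :=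
        Finset.sum_congr rfl fun _ _ => Finset.sum_comm
    _ = ∑ k, ∑ x, ∑ y, ∑ l, ∑ o, ∑ p, F x y k l o p := Finset.sum_comm
    _ = ∑ k, ∑ x, ∑ l, ∑ y, ∑ o, ∑ p, F x y k l o p :=
        Finset.sum_congr rfl fun _ _ => Finset.sum_congr rfl fun _ _ => Finset.sum_comm
    _ = ∑ k, ∑ l, ∑ x, ∑ y, ∑ o, ∑ p, F x y k l o p :=
        Finset.sum_congr rfl fun _ _ => Finset.sum_comm
    _ = ∑ k, ∑ l, ∑ x, ∑ o, ∑ y, ∑ p, F x y k l o p :=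
        Finset.sum_congr rfl fun _ _ => Finset.sum_congr rfl fun _ _ =>
          Finset.sum_congr rfl fun _ _ => Finset.sum_comm
    _ = ∑ k, ∑ l, ∑ o, ∑ x, ∑ y, ∑ p, F x y k l o p :=
        Finset.sum_congr rfl fun _ _ => Finset.sum_congr rfl fun _ _ => Finset.sum_comm
    _ = ∑ k, ∑ l, ∑ o, ∑ x, ∑ p, ∑ y, F x y k l o p :=
        Finset.sum_congr rfl fun _ _ => Finset.sum_congr rfl fun _ _ =>
          Finset.sum_congr rfl fun _ _ => Finset.sum_congr rfl fun _ _ => Finset.sum_comm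
    _ = ∑ k, ∑ l, ∑ o, ∑ p, ∑ x, ∑ y, F x y k l o p :=
        Finset.sum_congr rfl fun _ _ => Finset.sum_congr rfl fun _ _ =>
          Finset.sum_congr rfl fun _ _ => Finset.sum_comm

theorem sum4_rot1 {d : ℕ} (F : Fin d → Fin d → Fin d → Fin d → ℝ) :
    (∑ a, ∑ b, ∑ a', ∑ b', F a b a' b') = ∑ b, ∑ b', ∑ a, ∑ a', F a b a' b' := by
  calc (∑ a, ∑ b, ∑ a', ∑ b', F a b a' b')
      = ∑ b, ∑ a, ∑ a', ∑ b', F a b a' b' := Finset.sum_comm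
    _ = ∑ b, ∑ a, ∑ b', ∑ a', F a b a' b' :=
        Finset.sum_congr rfl fun _ _ => Finset.sum_congr rfl fun _ _ => Finset.sum_comm
    _ = ∑ b, ∑ b', ∑ a, ∑ a', F a b a' b' :=
        Finset.sum_congr rfl fun _ _ => Finset.sum_comm

theorem sum4_rot2 {d : ℕ} (F : Fin d → Fin d → Fin d → Fin d → ℝ) :
    (∑ a, ∑ b, ∑ a', ∑ b', F a b a' b') = ∑ a, ∑ a', ∑ b, ∑ b', F a b a' b' :=
  Finset.sum_congr rfl fun _ _ => Finset.sum_comm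

theorem kill1 {d : ℕ} (f1 f2 f3 : Fin d → Fin d → ℝ) (p q : Fin d → Fin d → Fin d → ℝ)
    (h0 : ∀ b c b' c', (∑ a, ∑ a', f1 a a' * p a b c * q a' b' c') = 0) :
    (∑ a, ∑ b, ∑ c, ∑ a', ∑ b', ∑ c',
      f1 a a' * f2 b b' * f3 c c' * p a b c * q a' b' c') = 0 := by
  rw [sum6_rot1 (fun a b c a' b' c' => f1 a a' * f2 b b' * f3 c c' * p a b c * q a' b' c')]
  have inner : ∀ b c b' c',
      (∑ a, ∑ a', f1 a a' * f2 b b' * f3 c c' * p a b c * q a' b' c') = 0 := by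
    intro b c b' c'
    calc (∑ a, ∑ a', f1 a a' * f2 b b' * f3 c c' * p a b c * q a' b' c')
        = ∑ a, ∑ a', (f2 b b' * f3 c c') * (f1 a a' * p a b c * q a' b' c') :=
          Finset.sum_congr rfl fun _ _ => Finset.sum_congr rfl fun _ _ => by ring
      _ = (f2 b b' * f3 c c') * ∑ a, ∑ a', f1 a a' * p a b c * q a' b' c' := by
          simp only [← Finset.mul_sum]
      _ = 0 := by rw [h0, mul_zero]
  simp only [inner, Finset.sum_const_zero]

theorem kill2 {d : ℕ} (f1 f2 f3 : Fin d → Fin d → ℝ) (p q : Fin d → Fin d → Fin d → ℝ)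
    (h0 : ∀ a c a' c', (∑ b, ∑ b', f2 b b' * p a b c * q a' b' c') = 0) :
    (∑ a, ∑ b, ∑ c, ∑ a', ∑ b', ∑ c',
      f1 a a' * f2 b b' * f3 c c' * p a b c * q a' b' c') = 0 := by
  rw [sum6_rot2 (fun a b c a' b' c' => f1 a a' * f2 b b' * f3 c c' * p a b c * q a' b' c')]
  have inner : ∀ a c a' c',
      (∑ b, ∑ b', f1 a a' * f2 b b' * f3 c c' * p a b c * q a' b' c') = 0 := by
    intro a c a' c'
    calc (∑ b, ∑ b', f1 a a' * f2 b b' * f3 c c' * p a b c * q a' b' c')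
        = ∑ b, ∑ b', (f1 a a' * f3 c c') * (f2 b b' * p a b c * q a' b' c') :=
          Finset.sum_congr rfl fun _ _ => Finset.sum_congr rfl fun _ _ => by ring
      _ = (f1 a a' * f3 c c') * ∑ b, ∑ b', f2 b b' * p a b c * q a' b' c' := by
          simp only [← Finset.mul_sum]
      _ = 0 := by rw [h0, mul_zero]
  simp only [inner, Finset.sum_const_zero]

theorem kill3 {d : ℕ} (f1 f2 f3 : Fin d → Fin d → ℝ) (p q : Fin d → Fin d → Fin d → ℝ)
    (h0 : ∀ a b a' b', (∑ c, ∑ c', f3 c c' * p a b c * q a' b' c') = 0) :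
    (∑ a, ∑ b, ∑ c, ∑ a', ∑ b', ∑ c',
      f1 a a' * f2 b b' * f3 c c' * p a b c * q a' b' c') = 0 := by
  rw [sum6_rot3 (fun a b c a' b' c' => f1 a a' * f2 b b' * f3 c c' * p a b c * q a' b' c')]
  have inner : ∀ a b a' b',
      (∑ c, ∑ c', f1 a a' * f2 b b' * f3 c c' * p a b c * q a' b' c') = 0 := by
    intro a b a' b'
    calc (∑ c, ∑ c', f1 a a' * f2 b b' * f3 c c' * p a b c * q a' b' c')
        = ∑ c, ∑ c', (f1 a a' * f2 b b') * (f3 c c' * p a b c * q a' b' c') :=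
          Finset.sum_congr rfl fun _ _ => Finset.sum_congr rfl fun _ _ => by ring
      _ = (f1 a a' * f2 b b') * ∑ c, ∑ c', f3 c c' * p a b c * q a' b' c' := by
          simp only [← Finset.mul_sum]
      _ = 0 := by rw [h0, mul_zero]
  simp only [inner, Finset.sum_const_zero]

theorem kill4_1 {d : ℕ} (f1 f2 : Fin d → Fin d → ℝ) (p q : Fin d → Fin d → ℝ)
    (h0 : ∀ b b', (∑ a, ∑ a', f1 a a' * p a b * q a' b') = 0) :
    (∑ a, ∑ b, ∑ a', ∑ b', f1 a a' * f2 b b' * p a b * q a' b') = 0 := by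
  rw [sum4_rot1 (fun a b a' b' => f1 a a' * f2 b b' * p a b * q a' b')]
  have inner : ∀ b b', (∑ a, ∑ a', f1 a a' * f2 b b' * p a b * q a' b') = 0 := by
    intro b b'
    calc (∑ a, ∑ a', f1 a a' * f2 b b' * p a b * q a' b')
        = ∑ a, ∑ a', f2 b b' * (f1 a a' * p a b * q a' b') :=
          Finset.sum_congr rfl fun _ _ => Finset.sum_congr rfl fun _ _ => by ring
      _ = f2 b b' * ∑ a, ∑ a', f1 a a' * p a b * q a' b' := by
          simp only [← Finset.mul_sum]
      _ = 0 := by rw [h0, mul_zero]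
  simp only [inner, Finset.sum_const_zero]

theorem kill4_2 {d : ℕ} (f1 f2 : Fin d → Fin d → ℝ) (p q : Fin d → Fin d → ℝ)
    (h0 : ∀ a a', (∑ b, ∑ b', f2 b b' * p a b * q a' b') = 0) :
    (∑ a, ∑ b, ∑ a', ∑ b', f1 a a' * f2 b b' * p a b * q a' b') = 0 := by
  rw [sum4_rot2 (fun a b a' b' => f1 a a' * f2 b b' * p a b * q a' b')]
  have inner : ∀ a a', (∑ b, ∑ b', f1 a a' * f2 b b' * p a b * q a' b') = 0 := by
    intro a a'
    calc (∑ b, ∑ b', f1 a a' * f2 b b' * p a b * q a' b')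
        = ∑ b, ∑ b', f1 a a' * (f2 b b' * p a b * q a' b') :=
          Finset.sum_congr rfl fun _ _ => Finset.sum_congr rfl fun _ _ => by ring
      _ = f1 a a' * ∑ b, ∑ b', f2 b b' * p a b * q a' b' := by
          simp only [← Finset.mul_sum]
      _ = 0 := by rw [h0, mul_zero]
  simp only [inner, Finset.sum_const_zero]

theorem fact1 {d : ℕ} (f1 f2 f3 : Fin d → Fin d → ℝ) (u w : Fin d → ℝ)
    (p q : Fin d → Fin d → ℝ) :
    (∑ a, ∑ b, ∑ c, ∑ a', ∑ b', ∑ c',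
      f1 a a' * f2 b b' * f3 c c' * (u a * p b c) * (w a' * q b' c'))
      = (∑ a, ∑ a', f1 a a' * u a * w a')
        * (∑ b, ∑ c, ∑ b', ∑ c', f2 b b' * f3 c c' * p b c * q b' c') := by
  rw [sum6_rot1 (fun a b c a' b' c' => f1 a a' * f2 b b' * f3 c c' * (u a * p b c) * (w a' * q b' c'))]
  have inner : ∀ b c b' c',
      (∑ a, ∑ a', f1 a a' * f2 b b' * f3 c c' * (u a * p b c) * (w a' * q b' c'))
        = (f2 b b' * f3 c c' * p b c * q b' c') * (∑ a, ∑ a', f1 a a' * u a * w a') := by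
    intro b c b' c'
    calc (∑ a, ∑ a', f1 a a' * f2 b b' * f3 c c' * (u a * p b c) * (w a' * q b' c'))
        = ∑ a, ∑ a', (f2 b b' * f3 c c' * p b c * q b' c') * (f1 a a' * u a * w a') :=
          Finset.sum_congr rfl fun _ _ => Finset.sum_congr rfl fun _ _ => by ring
      _ = (f2 b b' * f3 c c' * p b c * q b' c') * (∑ a, ∑ a', f1 a a' * u a * w a') := by
          simp only [← Finset.mul_sum]
  simp only [inner, ← Finset.sum_mul]
  ring

theorem fact2 {d : ℕ} (f1 f2 f3 : Fin d → Fin d → ℝ) (u w : Fin d → ℝ)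
    (p q : Fin d → Fin d → ℝ) :
    (∑ a, ∑ b, ∑ c, ∑ a', ∑ b', ∑ c',
      f1 a a' * f2 b b' * f3 c c' * (u b * p a c) * (w b' * q a' c'))
      = (∑ b, ∑ b', f2 b b' * u b * w b')
        * (∑ a, ∑ c, ∑ a', ∑ c', f1 a a' * f3 c c' * p a c * q a' c') := by
  rw [sum6_rot2 (fun a b c a' b' c' => f1 a a' * f2 b b' * f3 c c' * (u b * p a c) * (w b' * q a' c'))]
  have inner : ∀ a c a' c',
      (∑ b, ∑ b', f1 a a' * f2 b b' * f3 c c' * (u b * p a c) * (w b' * q a' c'))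
        = (f1 a a' * f3 c c' * p a c * q a' c') * (∑ b, ∑ b', f2 b b' * u b * w b') := by
    intro a c a' c'
    calc (∑ b, ∑ b', f1 a a' * f2 b b' * f3 c c' * (u b * p a c) * (w b' * q a' c'))
        = ∑ b, ∑ b', (f1 a a' * f3 c c' * p a c * q a' c') * (f2 b b' * u b * w b') :=
          Finset.sum_congr rfl fun _ _ => Finset.sum_congr rfl fun _ _ => by ring
      _ = (f1 a a' * f3 c c' * p a c * q a' c') * (∑ b, ∑ b', f2 b b' * u b * w b') := by
          simp only [← Finset.mul_sum]
  simp only [inner, ← Finset.sum_mul]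
  ring

theorem fact3 {d : ℕ} (f1 f2 f3 : Fin d → Fin d → ℝ) (u w : Fin d → ℝ)
    (p q : Fin d → Fin d → ℝ) :
    (∑ a, ∑ b, ∑ c, ∑ a', ∑ b', ∑ c',
      f1 a a' * f2 b b' * f3 c c' * (u c * p a b) * (w c' * q a' b'))
      = (∑ c, ∑ c', f3 c c' * u c * w c')
        * (∑ a, ∑ b, ∑ a', ∑ b', f1 a a' * f2 b b' * p a b * q a' b') := by
  rw [sum6_rot3 (fun a b c a' b' c' => f1 a a' * f2 b b' * f3 c c' * (u c * p a b) * (w c' * q a' b'))]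
  have inner : ∀ a b a' b',
      (∑ c, ∑ c', f1 a a' * f2 b b' * f3 c c' * (u c * p a b) * (w c' * q a' b'))
        = (f1 a a' * f2 b b' * p a b * q a' b') * (∑ c, ∑ c', f3 c c' * u c * w c') := by
    intro a b a' b'
    calc (∑ c, ∑ c', f1 a a' * f2 b b' * f3 c c' * (u c * p a b) * (w c' * q a' b'))
        = ∑ c, ∑ c', (f1 a a' * f2 b b' * p a b * q a' b') * (f3 c c' * u c * w c') :=
          Finset.sum_congr rfl fun _ _ => Finset.sum_congr rfl fun _ _ => by ring
      _ = (f1 a a' * f2 b b' * p a b * q a' b') * (∑ c, ∑ c', f3 c c' * u c * w c') := by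
          simp only [← Finset.mul_sum]
  simp only [inner, ← Finset.sum_mul]
  ring


theorem sum2_congr {d : ℕ} {F G : Fin d → Fin d → ℝ}
    (h : ∀ a b, F a b = G a b) :
    (∑ a, ∑ b, F a b) = ∑ a, ∑ b, G a b :=
  Finset.sum_congr rfl fun a _ => Finset.sum_congr rfl fun b _ => h a b

theorem sum4_congr {d : ℕ} {F G : Fin d → Fin d → Fin d → Fin d → ℝ}
    (h : ∀ a b a' b', F a b a' b' = G a b a' b') :
    (∑ a, ∑ b, ∑ a', ∑ b', F a b a' b') = ∑ a, ∑ b, ∑ a', ∑ b', G a b a' b' :=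
  Finset.sum_congr rfl fun a _ => Finset.sum_congr rfl fun b _ =>
    Finset.sum_congr rfl fun a' _ => Finset.sum_congr rfl fun b' _ => h a b a' b'

theorem sum6_congr {d : ℕ} {F G : Fin d → Fin d → Fin d → Fin d → Fin d → Fin d → ℝ}
    (h : ∀ a b c a' b' c', F a b c a' b' c' = G a b c a' b' c') :
    (∑ a, ∑ b, ∑ c, ∑ a', ∑ b', ∑ c', F a b c a' b' c')
      = ∑ a, ∑ b, ∑ c, ∑ a', ∑ b', ∑ c', G a b c a' b' c' :=
  Finset.sum_congr rfl fun a _ => Finset.sum_congr rfl fun b _ =>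
    Finset.sum_congr rfl fun c _ => Finset.sum_congr rfl fun a' _ =>
      Finset.sum_congr rfl fun b' _ => Finset.sum_congr rfl fun c' _ => h a b c a' b' c'

theorem raise_kill_right {d : ℕ} (G : Matrix (Fin d) (Fin d) ℝ) (Nf N : Fin d → ℝ)
    (hraise : ∀ y, (∑ y', G y y' * Nf y') = N y)
    (P : Fin d → ℝ) (hP : (∑ y, N y * P y) = 0) (K : ℝ) :
    (∑ y, ∑ y', G y y' * P y * (Nf y' * K)) = 0 := by
  have inner : ∀ y, (∑ y', G y y' * P y * (Nf y' * K)) = (P y * K) * N y := by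
    intro y
    calc (∑ y', G y y' * P y * (Nf y' * K))
        = (P y * K) * ∑ y', G y y' * Nf y' := by
          rw [Finset.mul_sum]; exact Finset.sum_congr rfl fun _ _ => by ring
      _ = (P y * K) * N y := by rw [hraise]
  calc (∑ y, ∑ y', G y y' * P y * (Nf y' * K)) = ∑ y, (P y * K) * N y := by
        simp only [inner]
    _ = K * ∑ y, N y * P y := by
        rw [Finset.mul_sum]; exact Finset.sum_congr rfl fun _ _ => by ring
    _ = 0 := by rw [hP, mul_zero]

theorem raise_kill_left {d : ℕ} (G : Matrix (Fin d) (Fin d) ℝ) (Nf N : Fin d → ℝ)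
    (hraise' : ∀ y', (∑ y, G y y' * Nf y) = N y')
    (Q : Fin d → ℝ) (hQ : (∑ y', N y' * Q y') = 0) (K : ℝ) :
    (∑ y, ∑ y', G y y' * (Nf y * K) * Q y') = 0 := by
  rw [Finset.sum_comm]
  have inner : ∀ y', (∑ y, G y y' * (Nf y * K) * Q y') = (K * Q y') * N y' := by
    intro y'
    calc (∑ y, G y y' * (Nf y * K) * Q y')
        = (K * Q y') * ∑ y, G y y' * Nf y := by
          rw [Finset.mul_sum]; exact Finset.sum_congr rfl fun _ _ => by ring
      _ = (K * Q y') * N y' := by rw [hraise']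
  calc (∑ y', ∑ y, G y y' * (Nf y * K) * Q y') = ∑ y', (K * Q y') * N y' := by
        simp only [inner]
    _ = K * ∑ y', N y' * Q y' := by
        rw [Finset.mul_sum]; exact Finset.sum_congr rfl fun _ _ => by ring
    _ = 0 := by rw [hQ, mul_zero]

theorem zz2 {d : ℕ} (N : Fin d → ℝ) (P Q : Fin d → ℝ) (hP : (∑ y, N y * P y) = 0) :
    (∑ y, ∑ y', (N y * N y') * P y * Q y') = 0 := by
  have inner : ∀ y, (∑ y', (N y * N y') * P y * Q y') = (N y * P y) * ∑ y', N y' * Q y' := by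
    intro y
    rw [Finset.mul_sum]; exact Finset.sum_congr rfl fun _ _ => by ring
  calc (∑ y, ∑ y', (N y * N y') * P y * Q y')
      = ∑ y, (N y * P y) * ∑ y', N y' * Q y' := by simp only [inner]
    _ = (∑ y', N y' * Q y') * ∑ y, N y * P y := by
        rw [Finset.mul_sum]; exact Finset.sum_congr rfl fun _ _ => by ring
    _ = 0 := by rw [hP, mul_zero]

theorem pull_zero {d : ℕ} (N : Fin d → ℝ) (C : ℝ) (f : Fin d → ℝ)
    (hf : (∑ y, N y * f y) = 0) : (∑ y, N y * (C * f y)) = 0 := by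
  calc (∑ y, N y * (C * f y)) = C * ∑ y, N y * f y := by
        rw [Finset.mul_sum]; exact Finset.sum_congr rfl fun _ _ => by ring
    _ = 0 := by rw [hf, mul_zero]

theorem normSq3_expand {d : ℕ} (M : Matrix (Fin d) (Fin d) ℝ) (A : Tensor d 3) :
    normSq M A = ∑ a, ∑ b, ∑ c, ∑ a', ∑ b', ∑ c',
      M a a' * M b b' * M c c' * A ![a,b,c] * A ![a',b',c'] := by
  rw [normSq, sum_pi3]
  refine Finset.sum_congr rfl fun a _ => Finset.sum_congr rfl fun b _ =>
    Finset.sum_congr rfl fun c _ => ?_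
  rw [sum_pi3]
  refine Finset.sum_congr rfl fun a' _ => Finset.sum_congr rfl fun b' _ =>
    Finset.sum_congr rfl fun c' _ => ?_
  simp [Fin.prod_univ_three]

theorem normSq2_expand {d : ℕ} (M : Matrix (Fin d) (Fin d) ℝ) (A : Tensor d 2) :
    normSq M A = ∑ a, ∑ b, ∑ a', ∑ b',
      M a a' * M b b' * A ![a,b] * A ![a',b'] := by
  rw [normSq, sum_pi2]
  refine Finset.sum_congr rfl fun a _ => Finset.sum_congr rfl fun b _ => ?_
  rw [sum_pi2]
  refine Finset.sum_congr rfl fun a' _ => Finset.sum_congr rfl fun b' _ => ?_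
  simp [Fin.prod_univ_two]

theorem evalBilin_add {d : ℕ} (A B : Matrix (Fin d) (Fin d) ℝ) (X Y : Fin d → ℝ) :
    evalBilin (A + B) X Y = evalBilin A X Y + evalBilin B X Y := by
  rw [evalBilin, evalBilin, evalBilin, ← Finset.sum_add_distrib]
  refine Finset.sum_congr rfl fun μ _ => ?_
  rw [← Finset.sum_add_distrib]
  refine Finset.sum_congr rfl fun ν _ => ?_
  simp [Matrix.add_apply]; ring

theorem evalBilin_sub {d : ℕ} (A B : Matrix (Fin d) (Fin d) ℝ) (X Y : Fin d → ℝ) :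
    evalBilin (A - B) X Y = evalBilin A X Y - evalBilin B X Y := by
  rw [evalBilin, evalBilin, evalBilin, ← Finset.sum_sub_distrib]
  refine Finset.sum_congr rfl fun μ _ => ?_
  rw [← Finset.sum_sub_distrib]
  refine Finset.sum_congr rfl fun ν _ => ?_
  simp [Matrix.sub_apply]; ring

theorem evalBilin_smul {d : ℕ} (r : ℝ) (A : Matrix (Fin d) (Fin d) ℝ) (X Y : Fin d → ℝ) :
    evalBilin (r • A) X Y = r * evalBilin A X Y := by
  rw [evalBilin, evalBilin, Finset.mul_sum]
  refine Finset.sum_congr rfl fun μ _ => ?_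
  rw [Finset.mul_sum]
  refine Finset.sum_congr rfl fun ν _ => ?_
  simp [Matrix.smul_apply]; ring

theorem evalBilin_vecMulVec {d : ℕ} (u v X Y : Fin d → ℝ) :
    evalBilin (Matrix.vecMulVec u v) X Y = (∑ μ, X μ * u μ) * (∑ ν, v ν * Y ν) := by
  rw [evalBilin, Finset.sum_mul]
  refine Finset.sum_congr rfl fun μ _ => ?_
  rw [Finset.mul_sum]
  refine Finset.sum_congr rfl fun ν _ => ?_
  simp [Matrix.vecMulVec_apply]; ring


set_option maxHeartbeats 2000000 in
/-- algebraic content of the Hamiltonian constraint: with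
`ξ = ξ∥ − x·N♭`, `H = H∥ − N♭ ∧ h` and
`T := (1/(d−2))·[ξ⊗ξ − (|ξ|²_g/2)·g] + (c/4)·[H² − (|H|²_g/6)·g]`, one has
`T(N,N) = (1/(2(d−2)))(|ξ∥|²_{g_W} + x²) + (c/24)(|H∥|²_{g_W} + 3|h|²_{g_W})`. -/
theorem hamiltonian_constraint_algebra {d : ℕ} (hd : 3 ≤ d) (c : ℝ)
    (g : Matrix (Fin d) (Fin d) ℝ) (hg : IsLorentzian g) (hdet : IsUnit g.det)
    (N : Fin d → ℝ) (hN : evalBilin g N N = -1)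
    (ξ ξpar : Fin d → ℝ) (x : ℝ)
    (hξtan : (∑ μ, N μ * ξpar μ) = 0)
    (hξdec : ξ = ξpar - x • flat g N)
    (H Hpar : Tensor d 3) (h : Tensor d 2)
    (hH : IsAlt H) (hHpar : IsAlt Hpar) (hh : IsAlt h)
    (hHtan : iprod N Hpar = 0) (hhtan : Tangential N h)
    (hHdec : H = Hpar - wedge1 (flat g N) h) :
    let T : Matrix (Fin d) (Fin d) ℝ :=
      (((d : ℝ) - 2)⁻¹) • (Matrix.vecMulVec ξ ξ - (oneNormSq g⁻¹ ξ / 2) • g)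
        + (c / 4) • (Hsq g⁻¹ H - (normSq g⁻¹ H / 6) • g)
    evalBilin T N N =
      (1 / (2 * ((d : ℝ) - 2))) * (oneNormSq (ginvW g N) ξpar + x ^ 2)
        + (c / 24) * (normSq (ginvW g N) Hpar + 3 * normSq (ginvW g N) h) := by
  intro T
  have hTdef : T = (((d : ℝ) - 2)⁻¹) • (Matrix.vecMulVec ξ ξ - (oneNormSq g⁻¹ ξ / 2) • g)
      + (c / 4) • (Hsq g⁻¹ H - (normSq g⁻¹ H / 6) • g) := rfl
  -- basic facts about g, g⁻¹, N
  have hGsymm : ∀ μ ν, g⁻¹ μ ν = g⁻¹ ν μ := by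
    have h1 : (g⁻¹).transpose = g⁻¹ := by
      rw [Matrix.transpose_nonsing_inv, hg.1]
    intro μ ν
    calc g⁻¹ μ ν = (g⁻¹).transpose ν μ := rfl
      _ = g⁻¹ ν μ := by rw [h1]
  have hraise : ∀ μ, (∑ ν, g⁻¹ μ ν * flat g N ν) = N μ := by
    have h1 : g⁻¹.mulVec (flat g N) = N := by
      have hfl : flat g N = g.mulVec N := rfl
      rw [hfl, Matrix.mulVec_mulVec, Matrix.nonsing_inv_mul g hdet, Matrix.one_mulVec]
    intro μ
    exact congrFun h1 μ
  have hraise' : ∀ ν, (∑ μ, g⁻¹ μ ν * flat g N μ) = N ν := by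
    intro ν
    rw [← hraise ν]
    exact Finset.sum_congr rfl fun μ _ => by rw [hGsymm]
  have hNNf : (∑ μ, N μ * flat g N μ) = -1 := by
    rw [← hN, evalBilin]
    refine Finset.sum_congr rfl fun μ _ => ?_
    rw [flat, Finset.mul_sum]
    exact Finset.sum_congr rfl fun ν _ => by ring
  have hNfN : (∑ μ, flat g N μ * N μ) = -1 := by
    rw [← hNNf]
    exact Finset.sum_congr rfl fun μ _ => by ring
  have hNGN : (∑ a, ∑ a', g⁻¹ a a' * flat g N a * flat g N a') = -1 := by
    have inner : ∀ a, (∑ a', g⁻¹ a a' * flat g N a * flat g N a') = flat g N a * N a := by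
      intro a
      calc (∑ a', g⁻¹ a a' * flat g N a * flat g N a')
          = flat g N a * ∑ a', g⁻¹ a a' * flat g N a' := by
            rw [Finset.mul_sum]; exact Finset.sum_congr rfl fun _ _ => by ring
        _ = flat g N a * N a := by rw [hraise]
    calc (∑ a, ∑ a', g⁻¹ a a' * flat g N a * flat g N a')
        = ∑ a, flat g N a * N a := by simp only [inner]
      _ = -1 := hNfN
  -- tangency of h in both slots
  have hh1 : ∀ b, (∑ μ, N μ * h ![μ, b]) = 0 := by
    intro b
    have hupd : ∀ μ : Fin d, Function.update (![b, b] : Fin 2 → Fin d) 0 μ = ![μ, b] := by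
      intro μ; funext i; fin_cases i <;> simp [Function.update]
    have := hhtan 0 ![b, b]
    simpa only [hupd] using this
  have hh2 : ∀ a, (∑ μ, N μ * h ![a, μ]) = 0 := by
    intro a
    have hupd : ∀ μ : Fin d, Function.update (![a, a] : Fin 2 → Fin d) 1 μ = ![a, μ] := by
      intro μ; funext i; fin_cases i <;> simp [Function.update]
    have := hhtan 1 ![a, a]
    simpa only [hupd] using this
  -- tangency of Hpar in all three slots
  have hP1 : ∀ b c, (∑ μ, N μ * Hpar ![μ, b, c]) = 0 := by
    intro b c
    have h2 : (∑ μ, N μ * Hpar ![μ, b, c]) = iprod N Hpar ![b, c] := rfl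
    rw [h2, hHtan]
    rfl
  have hswP : ∀ (v : Fin 3 → Fin d), Hpar (v ∘ Equiv.swap 0 1) = -Hpar v := by
    intro v
    rw [hHpar v (Equiv.swap 0 1)]
    simp [Equiv.Perm.sign_swap (by decide : (0 : Fin 3) ≠ 1)]
  have hswP2 : ∀ (v : Fin 3 → Fin d), Hpar (v ∘ Equiv.swap 0 2) = -Hpar v := by
    intro v
    rw [hHpar v (Equiv.swap 0 2)]
    simp [Equiv.Perm.sign_swap (by decide : (0 : Fin 3) ≠ 2)]
  have hP2 : ∀ a c, (∑ μ, N μ * Hpar ![a, μ, c]) = 0 := by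
    intro a c
    have key : ∀ μ : Fin d, Hpar ![a, μ, c] = -Hpar ![μ, a, c] := by
      intro μ
      have hv : (![μ, a, c] ∘ (Equiv.swap (0 : Fin 3) 1)) = ![a, μ, c] := by
        funext i
        fin_cases i <;> simp [Equiv.swap_apply_def] <;> rfl
      rw [← hv, hswP]
    calc (∑ μ, N μ * Hpar ![a, μ, c])
        = ∑ μ, -(N μ * Hpar ![μ, a, c]) := by
          refine Finset.sum_congr rfl fun μ _ => ?_
          rw [key]; ring
      _ = -∑ μ, N μ * Hpar ![μ, a, c] := by rw [Finset.sum_neg_distrib]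
      _ = 0 := by rw [hP1, neg_zero]
  have hP3 : ∀ a b, (∑ μ, N μ * Hpar ![a, b, μ]) = 0 := by
    intro a b
    have key : ∀ μ : Fin d, Hpar ![a, b, μ] = -Hpar ![μ, b, a] := by
      intro μ
      have hv : (![μ, b, a] ∘ (Equiv.swap (0 : Fin 3) 2)) = ![a, b, μ] := by
        funext i
        fin_cases i <;> simp [Equiv.swap_apply_def] <;> rfl
      rw [← hv, hswP2]
    calc (∑ μ, N μ * Hpar ![a, b, μ])
        = ∑ μ, -(N μ * Hpar ![μ, b, a]) := by
          refine Finset.sum_congr rfl fun μ _ => ?_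
          rw [key]; ring
      _ = -∑ μ, N μ * Hpar ![μ, b, a] := by rw [Finset.sum_neg_distrib]
      _ = 0 := by rw [hP1, neg_zero]
  -- pointwise decompositions
  have hξpt : ∀ μ, ξ μ = ξpar μ - x * flat g N μ := by
    intro μ; rw [hξdec]; simp
  have hHpt : ∀ v, H v = Hpar v - wedge1 (flat g N) h v := by
    intro v; rw [hHdec]; simp
  have hWval : ∀ a b c, wedge1 (flat g N) h ![a, b, c]
      = flat g N a * h ![b, c] - flat g N b * h ![a, c] + flat g N c * h ![a, b] := by
    intro a b c
    have c0 : (![a, b, c] ∘ (0 : Fin 3).succAbove) = ![b, c] := by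
      funext i; fin_cases i <;> rfl
    have c1 : (![a, b, c] ∘ (1 : Fin 3).succAbove) = ![a, c] := by
      funext i; fin_cases i <;> rfl
    have c2 : (![a, b, c] ∘ (2 : Fin 3).succAbove) = ![a, b] := by
      funext i; fin_cases i <;> rfl
    simp only [wedge1]
    rw [Fin.sum_univ_three, c0, c1, c2]
    norm_num
    show flat g N a * h ![b, c] - flat g N b * h ![a, c] + flat g N c * h ![a, b] = _
    ring
  -- Step A : N·ξ = x
  have hA : (∑ μ, N μ * ξ μ) = x := by
    calc (∑ μ, N μ * ξ μ)
        = ∑ μ, (N μ * ξpar μ - x * (N μ * flat g N μ)) := by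
          refine Finset.sum_congr rfl fun μ _ => ?_
          rw [hξpt]; ring
      _ = (∑ μ, N μ * ξpar μ) - x * ∑ μ, N μ * flat g N μ := by
          rw [Finset.sum_sub_distrib, Finset.mul_sum]
      _ = x := by rw [hξtan, hNNf]; ring
  have hA' : (∑ ν, ξ ν * N ν) = x := by
    rw [← hA]; exact Finset.sum_congr rfl fun μ _ => by ring
  -- Step B : |ξ|²_g = |ξpar|²_W - x²
  have sB : (∑ μ, ∑ ν, x * (g⁻¹ μ ν * ξpar μ * flat g N ν)) = 0 := by
    have inner : ∀ μ, (∑ ν, x * (g⁻¹ μ ν * ξpar μ * flat g N ν)) = x * ξpar μ * N μ := by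
      intro μ
      calc (∑ ν, x * (g⁻¹ μ ν * ξpar μ * flat g N ν))
          = (x * ξpar μ) * ∑ ν, g⁻¹ μ ν * flat g N ν := by
            rw [Finset.mul_sum]; exact Finset.sum_congr rfl fun _ _ => by ring
        _ = x * ξpar μ * N μ := by rw [hraise]
    calc (∑ μ, ∑ ν, x * (g⁻¹ μ ν * ξpar μ * flat g N ν))
        = ∑ μ, x * ξpar μ * N μ := by simp only [inner]
      _ = x * ∑ μ, N μ * ξpar μ := by
          rw [Finset.mul_sum]; exact Finset.sum_congr rfl fun _ _ => by ring
      _ = 0 := by rw [hξtan, mul_zero]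
  have sC : (∑ μ, ∑ ν, x * (g⁻¹ μ ν * flat g N μ * ξpar ν)) = 0 := by
    rw [Finset.sum_comm]
    have inner : ∀ ν, (∑ μ, x * (g⁻¹ μ ν * flat g N μ * ξpar ν)) = x * ξpar ν * N ν := by
      intro ν
      calc (∑ μ, x * (g⁻¹ μ ν * flat g N μ * ξpar ν))
          = (x * ξpar ν) * ∑ μ, g⁻¹ μ ν * flat g N μ := by
            rw [Finset.mul_sum]; exact Finset.sum_congr rfl fun _ _ => by ring
        _ = x * ξpar ν * N ν := by rw [hraise']
    calc (∑ ν, ∑ μ, x * (g⁻¹ μ ν * flat g N μ * ξpar ν))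
        = ∑ ν, x * ξpar ν * N ν := by simp only [inner]
      _ = x * ∑ ν, N ν * ξpar ν := by
          rw [Finset.mul_sum]; exact Finset.sum_congr rfl fun _ _ => by ring
      _ = 0 := by rw [hξtan, mul_zero]
  have sD : (∑ μ, ∑ ν, x * x * (g⁻¹ μ ν * flat g N μ * flat g N ν)) = -(x * x) := by
    have inner : ∀ μ, (∑ ν, x * x * (g⁻¹ μ ν * flat g N μ * flat g N ν))
        = (x * x) * (flat g N μ * N μ) := by
      intro μ
      calc (∑ ν, x * x * (g⁻¹ μ ν * flat g N μ * flat g N ν))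
          = (x * x * flat g N μ) * ∑ ν, g⁻¹ μ ν * flat g N ν := by
            rw [Finset.mul_sum]; exact Finset.sum_congr rfl fun _ _ => by ring
        _ = (x * x) * (flat g N μ * N μ) := by rw [hraise]; ring
    calc (∑ μ, ∑ ν, x * x * (g⁻¹ μ ν * flat g N μ * flat g N ν))
        = ∑ μ, (x * x) * (flat g N μ * N μ) := by simp only [inner]
      _ = (x * x) * ∑ μ, flat g N μ * N μ := by rw [Finset.mul_sum]
      _ = -(x * x) := by rw [hNfN]; ring
  have e1 : oneNormSq g⁻¹ ξ = oneNormSq g⁻¹ ξpar - x ^ 2 := by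
    rw [oneNormSq]
    calc (∑ μ, ∑ ν, g⁻¹ μ ν * ξ μ * ξ ν)
        = ∑ μ, ∑ ν, (g⁻¹ μ ν * ξpar μ * ξpar ν
            - (x * (g⁻¹ μ ν * ξpar μ * flat g N ν)
              + (x * (g⁻¹ μ ν * flat g N μ * ξpar ν)
                - x * x * (g⁻¹ μ ν * flat g N μ * flat g N ν)))) := by
          refine sum2_congr fun μ ν => ?_
          rw [hξpt μ, hξpt ν]; ring
      _ = (∑ μ, ∑ ν, g⁻¹ μ ν * ξpar μ * ξpar ν)
            - ((∑ μ, ∑ ν, x * (g⁻¹ μ ν * ξpar μ * flat g N ν))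
              + ((∑ μ, ∑ ν, x * (g⁻¹ μ ν * flat g N μ * ξpar ν))
                - (∑ μ, ∑ ν, x * x * (g⁻¹ μ ν * flat g N μ * flat g N ν)))) := by
          simp only [Finset.sum_sub_distrib, Finset.sum_add_distrib]
      _ = oneNormSq g⁻¹ ξpar - x ^ 2 := by
          rw [sB, sC, sD, oneNormSq]; ring
  have e2 : oneNormSq (ginvW g N) ξpar = oneNormSq g⁻¹ ξpar := by
    have hgW : ∀ μ ν, ginvW g N μ ν = g⁻¹ μ ν + N μ * N ν := by
      intro μ ν; simp [ginvW, Matrix.add_apply, Matrix.vecMulVec_apply]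
    rw [oneNormSq, oneNormSq]
    calc (∑ μ, ∑ ν, ginvW g N μ ν * ξpar μ * ξpar ν)
        = ∑ μ, ∑ ν, (g⁻¹ μ ν * ξpar μ * ξpar ν + (N μ * N ν) * ξpar μ * ξpar ν) := by
          refine sum2_congr fun μ ν => ?_
          rw [hgW]; ring
      _ = (∑ μ, ∑ ν, g⁻¹ μ ν * ξpar μ * ξpar ν)
            + (∑ μ, ∑ ν, (N μ * N ν) * ξpar μ * ξpar ν) := by
          simp only [Finset.sum_add_distrib]
      _ = ∑ μ, ∑ ν, g⁻¹ μ ν * ξpar μ * ξpar ν := by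
          rw [zz2 N ξpar ξpar hξtan, add_zero]
  have hB : oneNormSq g⁻¹ ξ = oneNormSq (ginvW g N) ξpar - x ^ 2 := by
    rw [e1, e2]
  have hgW : ∀ μ ν, ginvW g N μ ν = g⁻¹ μ ν + N μ * N ν := by
    intro μ ν; simp [ginvW, Matrix.add_apply, Matrix.vecMulVec_apply]
  -- h-norm conversion
  have hQh : normSq (ginvW g N) h
      = ∑ a, ∑ b, ∑ a', ∑ b', g⁻¹ a a' * g⁻¹ b b' * h ![a,b] * h ![a',b'] := by
    have kz1 : (∑ a, ∑ b, ∑ a', ∑ b',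
        (N a * N a') * g⁻¹ b b' * h ![a,b] * h ![a',b']) = 0 :=
      kill4_1 _ _ _ _ (fun b b' => zz2 N (fun a => h ![a,b]) (fun a' => h ![a',b']) (hh1 b))
    have kz2 : (∑ a, ∑ b, ∑ a', ∑ b',
        g⁻¹ a a' * (N b * N b') * h ![a,b] * h ![a',b']) = 0 :=
      kill4_2 _ _ _ _ (fun a a' => zz2 N (fun b => h ![a,b]) (fun b' => h ![a',b']) (hh2 a))
    have kz3 : (∑ a, ∑ b, ∑ a', ∑ b',
        (N a * N a') * (N b * N b') * h ![a,b] * h ![a',b']) = 0 :=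
      kill4_1 _ _ _ _ (fun b b' => zz2 N (fun a => h ![a,b]) (fun a' => h ![a',b']) (hh1 b))
    calc normSq (ginvW g N) h
        = ∑ a, ∑ b, ∑ a', ∑ b',
            ginvW g N a a' * ginvW g N b b' * h ![a,b] * h ![a',b'] := normSq2_expand _ _
      _ = ∑ a, ∑ b, ∑ a', ∑ b',
            (g⁻¹ a a' * g⁻¹ b b' * h ![a,b] * h ![a',b']
              + ((N a * N a') * g⁻¹ b b' * h ![a,b] * h ![a',b']
                + (g⁻¹ a a' * (N b * N b') * h ![a,b] * h ![a',b']
                  + (N a * N a') * (N b * N b') * h ![a,b] * h ![a',b']))) := by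
          refine sum4_congr fun a b a' b' => ?_
          rw [hgW a a', hgW b b']; ring
      _ = (∑ a, ∑ b, ∑ a', ∑ b', g⁻¹ a a' * g⁻¹ b b' * h ![a,b] * h ![a',b'])
            + ((∑ a, ∑ b, ∑ a', ∑ b', (N a * N a') * g⁻¹ b b' * h ![a,b] * h ![a',b'])
              + ((∑ a, ∑ b, ∑ a', ∑ b', g⁻¹ a a' * (N b * N b') * h ![a,b] * h ![a',b'])
                + (∑ a, ∑ b, ∑ a', ∑ b',
                    (N a * N a') * (N b * N b') * h ![a,b] * h ![a',b']))) := by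
          simp only [Finset.sum_add_distrib]
      _ = ∑ a, ∑ b, ∑ a', ∑ b', g⁻¹ a a' * g⁻¹ b b' * h ![a,b] * h ![a',b'] := by
          rw [kz1, kz2, kz3]; ring
  -- Hpar-norm conversion
  have hPP : normSq (ginvW g N) Hpar
      = ∑ a, ∑ b, ∑ c, ∑ a', ∑ b', ∑ c',
          g⁻¹ a a' * g⁻¹ b b' * g⁻¹ c c' * Hpar ![a,b,c] * Hpar ![a',b',c'] := by
    have z1 : ∀ (f2 f3 : Fin d → Fin d → ℝ), (∑ a, ∑ b, ∑ c, ∑ a', ∑ b', ∑ c',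
        (N a * N a') * f2 b b' * f3 c c' * Hpar ![a,b,c] * Hpar ![a',b',c']) = 0 :=
      fun f2 f3 => kill1 _ _ _ _ _
        (fun b c b' c' => zz2 N (fun a => Hpar ![a,b,c]) (fun a' => Hpar ![a',b',c']) (hP1 b c))
    have z2 : ∀ (f1 f3 : Fin d → Fin d → ℝ), (∑ a, ∑ b, ∑ c, ∑ a', ∑ b', ∑ c',
        f1 a a' * (N b * N b') * f3 c c' * Hpar ![a,b,c] * Hpar ![a',b',c']) = 0 :=
      fun f1 f3 => kill2 _ _ _ _ _
        (fun a c a' c' => zz2 N (fun b => Hpar ![a,b,c]) (fun b' => Hpar ![a',b',c']) (hP2 a c))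
    have z3 : ∀ (f1 f2 : Fin d → Fin d → ℝ), (∑ a, ∑ b, ∑ c, ∑ a', ∑ b', ∑ c',
        f1 a a' * f2 b b' * (N c * N c') * Hpar ![a,b,c] * Hpar ![a',b',c']) = 0 :=
      fun f1 f2 => kill3 _ _ _ _ _
        (fun a b a' b' => zz2 N (fun c => Hpar ![a,b,c]) (fun c' => Hpar ![a',b',c']) (hP3 a b))
    calc normSq (ginvW g N) Hpar
        = ∑ a, ∑ b, ∑ c, ∑ a', ∑ b', ∑ c',
            ginvW g N a a' * ginvW g N b b' * ginvW g N c c'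
              * Hpar ![a,b,c] * Hpar ![a',b',c'] := normSq3_expand _ _
      _ = ∑ a, ∑ b, ∑ c, ∑ a', ∑ b', ∑ c',
            (g⁻¹ a a' * g⁻¹ b b' * g⁻¹ c c' * Hpar ![a,b,c] * Hpar ![a',b',c']
              + ((N a * N a') * g⁻¹ b b' * g⁻¹ c c' * Hpar ![a,b,c] * Hpar ![a',b',c']
                + (g⁻¹ a a' * (N b * N b') * g⁻¹ c c' * Hpar ![a,b,c] * Hpar ![a',b',c']
                  + (g⁻¹ a a' * g⁻¹ b b' * (N c * N c') * Hpar ![a,b,c] * Hpar ![a',b',c']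
                    + ((N a * N a') * (N b * N b') * g⁻¹ c c' * Hpar ![a,b,c] * Hpar ![a',b',c']
                      + ((N a * N a') * g⁻¹ b b' * (N c * N c') * Hpar ![a,b,c] * Hpar ![a',b',c']
                        + (g⁻¹ a a' * (N b * N b') * (N c * N c') * Hpar ![a,b,c] * Hpar ![a',b',c']
                          + (N a * N a') * (N b * N b') * (N c * N c')
                              * Hpar ![a,b,c] * Hpar ![a',b',c']))))))) := by
          refine sum6_congr fun a b c a' b' c' => ?_
          rw [hgW a a', hgW b b', hgW c c']; ring
      _ = (∑ a, ∑ b, ∑ c, ∑ a', ∑ b', ∑ c',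
            g⁻¹ a a' * g⁻¹ b b' * g⁻¹ c c' * Hpar ![a,b,c] * Hpar ![a',b',c'])
            + ((∑ a, ∑ b, ∑ c, ∑ a', ∑ b', ∑ c',
                (N a * N a') * g⁻¹ b b' * g⁻¹ c c' * Hpar ![a,b,c] * Hpar ![a',b',c'])
              + ((∑ a, ∑ b, ∑ c, ∑ a', ∑ b', ∑ c',
                  g⁻¹ a a' * (N b * N b') * g⁻¹ c c' * Hpar ![a,b,c] * Hpar ![a',b',c'])
                + ((∑ a, ∑ b, ∑ c, ∑ a', ∑ b', ∑ c',
                    g⁻¹ a a' * g⁻¹ b b' * (N c * N c') * Hpar ![a,b,c] * Hpar ![a',b',c'])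
                  + ((∑ a, ∑ b, ∑ c, ∑ a', ∑ b', ∑ c',
                      (N a * N a') * (N b * N b') * g⁻¹ c c' * Hpar ![a,b,c] * Hpar ![a',b',c'])
                    + ((∑ a, ∑ b, ∑ c, ∑ a', ∑ b', ∑ c',
                        (N a * N a') * g⁻¹ b b' * (N c * N c') * Hpar ![a,b,c] * Hpar ![a',b',c'])
                      + ((∑ a, ∑ b, ∑ c, ∑ a', ∑ b', ∑ c',
                          g⁻¹ a a' * (N b * N b') * (N c * N c') * Hpar ![a,b,c] * Hpar ![a',b',c'])
                        + (∑ a, ∑ b, ∑ c, ∑ a', ∑ b', ∑ c',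
                            (N a * N a') * (N b * N b') * (N c * N c')
                              * Hpar ![a,b,c] * Hpar ![a',b',c']))))))) := by
          simp only [Finset.sum_add_distrib]
      _ = ∑ a, ∑ b, ∑ c, ∑ a', ∑ b', ∑ c',
            g⁻¹ a a' * g⁻¹ b b' * g⁻¹ c c' * Hpar ![a,b,c] * Hpar ![a',b',c'] := by
          rw [z1 (fun b b' => g⁻¹ b b') (fun c c' => g⁻¹ c c'),
            z2 (fun a a' => g⁻¹ a a') (fun c c' => g⁻¹ c c'),
            z3 (fun a a' => g⁻¹ a a') (fun b b' => g⁻¹ b b'),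
            z1 (fun b b' => N b * N b') (fun c c' => g⁻¹ c c'),
            z1 (fun b b' => g⁻¹ b b') (fun c c' => N c * N c'),
            z2 (fun a a' => g⁻¹ a a') (fun c c' => N c * N c'),
            z1 (fun b b' => N b * N b') (fun c c' => N c * N c')]
          ring
  -- decomposition of |H|²
  have hPW : (∑ a, ∑ b, ∑ c, ∑ a', ∑ b', ∑ c',
      g⁻¹ a a' * g⁻¹ b b' * g⁻¹ c c' * Hpar ![a,b,c]
        * wedge1 (flat g N) h ![a',b',c']) = 0 := by
    have k1 : (∑ a, ∑ b, ∑ c, ∑ a', ∑ b', ∑ c',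
        g⁻¹ a a' * g⁻¹ b b' * g⁻¹ c c' * Hpar ![a,b,c] * (flat g N a' * h ![b',c'])) = 0 :=
      kill1 _ _ _ _ _ (fun b c b' c' =>
        raise_kill_right g⁻¹ (flat g N) N hraise (fun a => Hpar ![a,b,c]) (hP1 b c) (h ![b',c']))
    have k2 : (∑ a, ∑ b, ∑ c, ∑ a', ∑ b', ∑ c',
        g⁻¹ a a' * g⁻¹ b b' * g⁻¹ c c' * Hpar ![a,b,c] * (flat g N b' * h ![a',c'])) = 0 :=
      kill2 _ _ _ _ _ (fun a c a' c' =>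
        raise_kill_right g⁻¹ (flat g N) N hraise (fun b => Hpar ![a,b,c]) (hP2 a c) (h ![a',c']))
    have k3 : (∑ a, ∑ b, ∑ c, ∑ a', ∑ b', ∑ c',
        g⁻¹ a a' * g⁻¹ b b' * g⁻¹ c c' * Hpar ![a,b,c] * (flat g N c' * h ![a',b'])) = 0 :=
      kill3 _ _ _ _ _ (fun a b a' b' =>
        raise_kill_right g⁻¹ (flat g N) N hraise (fun c => Hpar ![a,b,c]) (hP3 a b) (h ![a',b']))
    calc (∑ a, ∑ b, ∑ c, ∑ a', ∑ b', ∑ c',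
        g⁻¹ a a' * g⁻¹ b b' * g⁻¹ c c' * Hpar ![a,b,c] * wedge1 (flat g N) h ![a',b',c'])
        = ∑ a, ∑ b, ∑ c, ∑ a', ∑ b', ∑ c',
            (g⁻¹ a a' * g⁻¹ b b' * g⁻¹ c c' * Hpar ![a,b,c] * (flat g N a' * h ![b',c'])
              - (g⁻¹ a a' * g⁻¹ b b' * g⁻¹ c c' * Hpar ![a,b,c] * (flat g N b' * h ![a',c'])
                - g⁻¹ a a' * g⁻¹ b b' * g⁻¹ c c' * Hpar ![a,b,c] * (flat g N c' * h ![a',b']))) := by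
          refine sum6_congr fun a b c a' b' c' => ?_
          rw [hWval]; ring
      _ = (∑ a, ∑ b, ∑ c, ∑ a', ∑ b', ∑ c',
            g⁻¹ a a' * g⁻¹ b b' * g⁻¹ c c' * Hpar ![a,b,c] * (flat g N a' * h ![b',c']))
            - ((∑ a, ∑ b, ∑ c, ∑ a', ∑ b', ∑ c',
                g⁻¹ a a' * g⁻¹ b b' * g⁻¹ c c' * Hpar ![a,b,c] * (flat g N b' * h ![a',c']))
              - (∑ a, ∑ b, ∑ c, ∑ a', ∑ b', ∑ c',
                  g⁻¹ a a' * g⁻¹ b b' * g⁻¹ c c' * Hpar ![a,b,c] * (flat g N c' * h ![a',b']))) := by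
          simp only [Finset.sum_sub_distrib]
      _ = 0 := by rw [k1, k2, k3]; ring
  have hWP : (∑ a, ∑ b, ∑ c, ∑ a', ∑ b', ∑ c',
      g⁻¹ a a' * g⁻¹ b b' * g⁻¹ c c' * wedge1 (flat g N) h ![a,b,c]
        * Hpar ![a',b',c']) = 0 := by
    have k1 : (∑ a, ∑ b, ∑ c, ∑ a', ∑ b', ∑ c',
        g⁻¹ a a' * g⁻¹ b b' * g⁻¹ c c' * (flat g N a * h ![b,c]) * Hpar ![a',b',c']) = 0 :=
      kill1 _ _ _ _ _ (fun b c b' c' =>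
        raise_kill_left g⁻¹ (flat g N) N hraise' (fun a' => Hpar ![a',b',c']) (hP1 b' c') (h ![b,c]))
    have k2 : (∑ a, ∑ b, ∑ c, ∑ a', ∑ b', ∑ c',
        g⁻¹ a a' * g⁻¹ b b' * g⁻¹ c c' * (flat g N b * h ![a,c]) * Hpar ![a',b',c']) = 0 :=
      kill2 _ _ _ _ _ (fun a c a' c' =>
        raise_kill_left g⁻¹ (flat g N) N hraise' (fun b' => Hpar ![a',b',c']) (hP2 a' c') (h ![a,c]))
    have k3 : (∑ a, ∑ b, ∑ c, ∑ a', ∑ b', ∑ c',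
        g⁻¹ a a' * g⁻¹ b b' * g⁻¹ c c' * (flat g N c * h ![a,b]) * Hpar ![a',b',c']) = 0 :=
      kill3 _ _ _ _ _ (fun a b a' b' =>
        raise_kill_left g⁻¹ (flat g N) N hraise' (fun c' => Hpar ![a',b',c']) (hP3 a' b') (h ![a,b]))
    calc (∑ a, ∑ b, ∑ c, ∑ a', ∑ b', ∑ c',
        g⁻¹ a a' * g⁻¹ b b' * g⁻¹ c c' * wedge1 (flat g N) h ![a,b,c] * Hpar ![a',b',c'])
        = ∑ a, ∑ b, ∑ c, ∑ a', ∑ b', ∑ c',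
            (g⁻¹ a a' * g⁻¹ b b' * g⁻¹ c c' * (flat g N a * h ![b,c]) * Hpar ![a',b',c']
              - (g⁻¹ a a' * g⁻¹ b b' * g⁻¹ c c' * (flat g N b * h ![a,c]) * Hpar ![a',b',c']
                - g⁻¹ a a' * g⁻¹ b b' * g⁻¹ c c' * (flat g N c * h ![a,b]) * Hpar ![a',b',c'])) := by
          refine sum6_congr fun a b c a' b' c' => ?_
          rw [hWval]; ring
      _ = (∑ a, ∑ b, ∑ c, ∑ a', ∑ b', ∑ c',
            g⁻¹ a a' * g⁻¹ b b' * g⁻¹ c c' * (flat g N a * h ![b,c]) * Hpar ![a',b',c'])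
            - ((∑ a, ∑ b, ∑ c, ∑ a', ∑ b', ∑ c',
                g⁻¹ a a' * g⁻¹ b b' * g⁻¹ c c' * (flat g N b * h ![a,c]) * Hpar ![a',b',c'])
              - (∑ a, ∑ b, ∑ c, ∑ a', ∑ b', ∑ c',
                  g⁻¹ a a' * g⁻¹ b b' * g⁻¹ c c' * (flat g N c * h ![a,b]) * Hpar ![a',b',c'])) := by
          simp only [Finset.sum_sub_distrib]
      _ = 0 := by rw [k1, k2, k3]; ring
  have hWW : (∑ a, ∑ b, ∑ c, ∑ a', ∑ b', ∑ c',
      g⁻¹ a a' * g⁻¹ b b' * g⁻¹ c c' * wedge1 (flat g N) h ![a,b,c]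
        * wedge1 (flat g N) h ![a',b',c'])
      = -3 * ∑ a, ∑ b, ∑ a', ∑ b', g⁻¹ a a' * g⁻¹ b b' * h ![a,b] * h ![a',b'] := by
    have f11 : (∑ a, ∑ b, ∑ c, ∑ a', ∑ b', ∑ c',
        g⁻¹ a a' * g⁻¹ b b' * g⁻¹ c c' * (flat g N a * h ![b,c]) * (flat g N a' * h ![b',c']))
        = (∑ a, ∑ a', g⁻¹ a a' * flat g N a * flat g N a')
          * (∑ b, ∑ c, ∑ b', ∑ c', g⁻¹ b b' * g⁻¹ c c' * h ![b,c] * h ![b',c']) :=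
      fact1 _ _ _ _ _ _ _
    have f22 : (∑ a, ∑ b, ∑ c, ∑ a', ∑ b', ∑ c',
        g⁻¹ a a' * g⁻¹ b b' * g⁻¹ c c' * (flat g N b * h ![a,c]) * (flat g N b' * h ![a',c']))
        = (∑ b, ∑ b', g⁻¹ b b' * flat g N b * flat g N b')
          * (∑ a, ∑ c, ∑ a', ∑ c', g⁻¹ a a' * g⁻¹ c c' * h ![a,c] * h ![a',c']) :=
      fact2 _ _ _ _ _ _ _
    have f33 : (∑ a, ∑ b, ∑ c, ∑ a', ∑ b', ∑ c',
        g⁻¹ a a' * g⁻¹ b b' * g⁻¹ c c' * (flat g N c * h ![a,b]) * (flat g N c' * h ![a',b']))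
        = (∑ c, ∑ c', g⁻¹ c c' * flat g N c * flat g N c')
          * (∑ a, ∑ b, ∑ a', ∑ b', g⁻¹ a a' * g⁻¹ b b' * h ![a,b] * h ![a',b']) :=
      fact3 _ _ _ _ _ _ _
    have k12 : (∑ a, ∑ b, ∑ c, ∑ a', ∑ b', ∑ c',
        g⁻¹ a a' * g⁻¹ b b' * g⁻¹ c c' * (flat g N a * h ![b,c]) * (flat g N b' * h ![a',c'])) = 0 :=
      kill1 _ _ _ _ _ (fun b c b' c' =>
        raise_kill_left g⁻¹ (flat g N) N hraise'
          (fun a' => flat g N b' * h ![a',c'])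
          (pull_zero N (flat g N b') (fun a' => h ![a',c']) (hh1 c')) (h ![b,c]))
    have k13 : (∑ a, ∑ b, ∑ c, ∑ a', ∑ b', ∑ c',
        g⁻¹ a a' * g⁻¹ b b' * g⁻¹ c c' * (flat g N a * h ![b,c]) * (flat g N c' * h ![a',b'])) = 0 :=
      kill1 _ _ _ _ _ (fun b c b' c' =>
        raise_kill_left g⁻¹ (flat g N) N hraise'
          (fun a' => flat g N c' * h ![a',b'])
          (pull_zero N (flat g N c') (fun a' => h ![a',b']) (hh1 b')) (h ![b,c]))
    have k21 : (∑ a, ∑ b, ∑ c, ∑ a', ∑ b', ∑ c',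
        g⁻¹ a a' * g⁻¹ b b' * g⁻¹ c c' * (flat g N b * h ![a,c]) * (flat g N a' * h ![b',c'])) = 0 :=
      kill2 _ _ _ _ _ (fun a c a' c' =>
        raise_kill_left g⁻¹ (flat g N) N hraise'
          (fun b' => flat g N a' * h ![b',c'])
          (pull_zero N (flat g N a') (fun b' => h ![b',c']) (hh1 c')) (h ![a,c]))
    have k23 : (∑ a, ∑ b, ∑ c, ∑ a', ∑ b', ∑ c',
        g⁻¹ a a' * g⁻¹ b b' * g⁻¹ c c' * (flat g N b * h ![a,c]) * (flat g N c' * h ![a',b'])) = 0 :=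
      kill2 _ _ _ _ _ (fun a c a' c' =>
        raise_kill_left g⁻¹ (flat g N) N hraise'
          (fun b' => flat g N c' * h ![a',b'])
          (pull_zero N (flat g N c') (fun b' => h ![a',b']) (hh2 a')) (h ![a,c]))
    have k31 : (∑ a, ∑ b, ∑ c, ∑ a', ∑ b', ∑ c',
        g⁻¹ a a' * g⁻¹ b b' * g⁻¹ c c' * (flat g N c * h ![a,b]) * (flat g N a' * h ![b',c'])) = 0 :=
      kill3 _ _ _ _ _ (fun a b a' b' =>
        raise_kill_left g⁻¹ (flat g N) N hraise'
          (fun c' => flat g N a' * h ![b',c'])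
          (pull_zero N (flat g N a') (fun c' => h ![b',c']) (hh2 b')) (h ![a,b]))
    have k32 : (∑ a, ∑ b, ∑ c, ∑ a', ∑ b', ∑ c',
        g⁻¹ a a' * g⁻¹ b b' * g⁻¹ c c' * (flat g N c * h ![a,b]) * (flat g N b' * h ![a',c'])) = 0 :=
      kill3 _ _ _ _ _ (fun a b a' b' =>
        raise_kill_left g⁻¹ (flat g N) N hraise'
          (fun c' => flat g N b' * h ![a',c'])
          (pull_zero N (flat g N b') (fun c' => h ![a',c']) (hh2 a')) (h ![a,b]))
    calc (∑ a, ∑ b, ∑ c, ∑ a', ∑ b', ∑ c',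
        g⁻¹ a a' * g⁻¹ b b' * g⁻¹ c c' * wedge1 (flat g N) h ![a,b,c]
          * wedge1 (flat g N) h ![a',b',c'])
        = ∑ a, ∑ b, ∑ c, ∑ a', ∑ b', ∑ c',
            (((g⁻¹ a a' * g⁻¹ b b' * g⁻¹ c c' * (flat g N a * h ![b,c]) * (flat g N a' * h ![b',c'])
              - g⁻¹ a a' * g⁻¹ b b' * g⁻¹ c c' * (flat g N a * h ![b,c]) * (flat g N b' * h ![a',c']))
              + g⁻¹ a a' * g⁻¹ b b' * g⁻¹ c c' * (flat g N a * h ![b,c]) * (flat g N c' * h ![a',b']))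
            - (((g⁻¹ a a' * g⁻¹ b b' * g⁻¹ c c' * (flat g N b * h ![a,c]) * (flat g N a' * h ![b',c'])
              - g⁻¹ a a' * g⁻¹ b b' * g⁻¹ c c' * (flat g N b * h ![a,c]) * (flat g N b' * h ![a',c']))
              + g⁻¹ a a' * g⁻¹ b b' * g⁻¹ c c' * (flat g N b * h ![a,c]) * (flat g N c' * h ![a',b']))
            - ((g⁻¹ a a' * g⁻¹ b b' * g⁻¹ c c' * (flat g N c * h ![a,b]) * (flat g N a' * h ![b',c'])
              - g⁻¹ a a' * g⁻¹ b b' * g⁻¹ c c' * (flat g N c * h ![a,b]) * (flat g N b' * h ![a',c']))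
              + g⁻¹ a a' * g⁻¹ b b' * g⁻¹ c c' * (flat g N c * h ![a,b]) * (flat g N c' * h ![a',b'])))) := by
          refine sum6_congr fun a b c a' b' c' => ?_
          rw [hWval a b c, hWval a' b' c']; ring
      _ = (((∑ a, ∑ b, ∑ c, ∑ a', ∑ b', ∑ c',
            g⁻¹ a a' * g⁻¹ b b' * g⁻¹ c c' * (flat g N a * h ![b,c]) * (flat g N a' * h ![b',c']))
            - (∑ a, ∑ b, ∑ c, ∑ a', ∑ b', ∑ c',
              g⁻¹ a a' * g⁻¹ b b' * g⁻¹ c c' * (flat g N a * h ![b,c]) * (flat g N b' * h ![a',c'])))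
            + (∑ a, ∑ b, ∑ c, ∑ a', ∑ b', ∑ c',
              g⁻¹ a a' * g⁻¹ b b' * g⁻¹ c c' * (flat g N a * h ![b,c]) * (flat g N c' * h ![a',b'])))
          - ((((∑ a, ∑ b, ∑ c, ∑ a', ∑ b', ∑ c',
              g⁻¹ a a' * g⁻¹ b b' * g⁻¹ c c' * (flat g N b * h ![a,c]) * (flat g N a' * h ![b',c']))
            - (∑ a, ∑ b, ∑ c, ∑ a', ∑ b', ∑ c',
              g⁻¹ a a' * g⁻¹ b b' * g⁻¹ c c' * (flat g N b * h ![a,c]) * (flat g N b' * h ![a',c'])))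
            + (∑ a, ∑ b, ∑ c, ∑ a', ∑ b', ∑ c',
              g⁻¹ a a' * g⁻¹ b b' * g⁻¹ c c' * (flat g N b * h ![a,c]) * (flat g N c' * h ![a',b'])))
          - (((∑ a, ∑ b, ∑ c, ∑ a', ∑ b', ∑ c',
              g⁻¹ a a' * g⁻¹ b b' * g⁻¹ c c' * (flat g N c * h ![a,b]) * (flat g N a' * h ![b',c']))
            - (∑ a, ∑ b, ∑ c, ∑ a', ∑ b', ∑ c',
              g⁻¹ a a' * g⁻¹ b b' * g⁻¹ c c' * (flat g N c * h ![a,b]) * (flat g N b' * h ![a',c'])))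
            + (∑ a, ∑ b, ∑ c, ∑ a', ∑ b', ∑ c',
              g⁻¹ a a' * g⁻¹ b b' * g⁻¹ c c' * (flat g N c * h ![a,b]) * (flat g N c' * h ![a',b'])))) := by
          simp only [Finset.sum_sub_distrib, Finset.sum_add_distrib]
      _ = -3 * ∑ a, ∑ b, ∑ a', ∑ b', g⁻¹ a a' * g⁻¹ b b' * h ![a,b] * h ![a',b'] := by
          rw [f11, f22, f33, k12, k13, k21, k23, k31, k32, hNGN]
          ring
  have hHsplit : normSq g⁻¹ H
      = ((∑ a, ∑ b, ∑ c, ∑ a', ∑ b', ∑ c',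
          g⁻¹ a a' * g⁻¹ b b' * g⁻¹ c c' * Hpar ![a,b,c] * Hpar ![a',b',c'])
        - (∑ a, ∑ b, ∑ c, ∑ a', ∑ b', ∑ c',
          g⁻¹ a a' * g⁻¹ b b' * g⁻¹ c c' * Hpar ![a,b,c] * wedge1 (flat g N) h ![a',b',c']))
        - ((∑ a, ∑ b, ∑ c, ∑ a', ∑ b', ∑ c',
          g⁻¹ a a' * g⁻¹ b b' * g⁻¹ c c' * wedge1 (flat g N) h ![a,b,c] * Hpar ![a',b',c'])
        - (∑ a, ∑ b, ∑ c, ∑ a', ∑ b', ∑ c',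
          g⁻¹ a a' * g⁻¹ b b' * g⁻¹ c c' * wedge1 (flat g N) h ![a,b,c]
            * wedge1 (flat g N) h ![a',b',c'])) := by
    calc normSq g⁻¹ H
        = ∑ a, ∑ b, ∑ c, ∑ a', ∑ b', ∑ c',
            g⁻¹ a a' * g⁻¹ b b' * g⁻¹ c c' * H ![a,b,c] * H ![a',b',c'] := normSq3_expand _ _
      _ = ∑ a, ∑ b, ∑ c, ∑ a', ∑ b', ∑ c',
            ((g⁻¹ a a' * g⁻¹ b b' * g⁻¹ c c' * Hpar ![a,b,c] * Hpar ![a',b',c']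
              - g⁻¹ a a' * g⁻¹ b b' * g⁻¹ c c' * Hpar ![a,b,c] * wedge1 (flat g N) h ![a',b',c'])
            - (g⁻¹ a a' * g⁻¹ b b' * g⁻¹ c c' * wedge1 (flat g N) h ![a,b,c] * Hpar ![a',b',c']
              - g⁻¹ a a' * g⁻¹ b b' * g⁻¹ c c' * wedge1 (flat g N) h ![a,b,c]
                  * wedge1 (flat g N) h ![a',b',c'])) := by
          refine sum6_congr fun a b c a' b' c' => ?_
          rw [hHpt ![a,b,c], hHpt ![a',b',c']]; ring
      _ = _ := by simp only [Finset.sum_sub_distrib]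
  have hHnorm : normSq g⁻¹ H = normSq (ginvW g N) Hpar - 3 * normSq (ginvW g N) h := by
    rw [hHsplit, hPW, hWP, hWW, hPP, hQh]
    ring
  -- contraction of H with N gives h
  have hiH : ∀ a b, (∑ μ, N μ * H ![μ, a, b]) = h ![a, b] := by
    intro a b
    have sb : (∑ μ, (N μ * flat g N μ) * h ![a,b]) = -h ![a,b] := by
      rw [← Finset.sum_mul, hNNf]; ring
    have sc : (∑ μ, flat g N a * (N μ * h ![μ,b])) = 0 := by
      rw [← Finset.mul_sum, hh1, mul_zero]
    have sd : (∑ μ, flat g N b * (N μ * h ![μ,a])) = 0 := by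
      rw [← Finset.mul_sum, hh1, mul_zero]
    calc (∑ μ, N μ * H ![μ, a, b])
        = ∑ μ, (N μ * Hpar ![μ,a,b]
            - ((N μ * flat g N μ) * h ![a,b]
              - (flat g N a * (N μ * h ![μ,b]) - flat g N b * (N μ * h ![μ,a])))) := by
          refine Finset.sum_congr rfl fun μ _ => ?_
          rw [hHpt ![μ,a,b], hWval μ a b]; ring
      _ = (∑ μ, N μ * Hpar ![μ,a,b])
            - ((∑ μ, (N μ * flat g N μ) * h ![a,b])
              - ((∑ μ, flat g N a * (N μ * h ![μ,b]))
                - (∑ μ, flat g N b * (N μ * h ![μ,a])))) := by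
          simp only [Finset.sum_sub_distrib]
      _ = h ![a,b] := by rw [hP1, sb, sc, sd]; ring
  -- Hsq contracted with N twice
  have hHsqNN : evalBilin (Hsq g⁻¹ H) N N = normSq (ginvW g N) h := by
    calc evalBilin (Hsq g⁻¹ H) N N
        = ∑ μ, ∑ ν, ∑ κ, ∑ l, ∑ o, ∑ p,
            g⁻¹ κ l * g⁻¹ o p * (N μ * H ![μ,κ,o]) * (N ν * H ![ν,l,p]) := by
          rw [evalBilin]
          refine Finset.sum_congr rfl fun μ _ => Finset.sum_congr rfl fun ν _ => ?_
          have e0 : Hsq g⁻¹ H μ ν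
              = ∑ κ, ∑ l, ∑ o, ∑ p, g⁻¹ κ l * g⁻¹ o p * H ![μ,κ,o] * H ![ν,l,p] := rfl
          rw [e0, Finset.mul_sum, Finset.sum_mul]
          refine Finset.sum_congr rfl fun κ _ => ?_
          rw [Finset.mul_sum, Finset.sum_mul]
          refine Finset.sum_congr rfl fun l _ => ?_
          rw [Finset.mul_sum, Finset.sum_mul]
          refine Finset.sum_congr rfl fun o _ => ?_
          rw [Finset.mul_sum, Finset.sum_mul]
          refine Finset.sum_congr rfl fun p _ => ?_
          ring
      _ = ∑ κ, ∑ l, ∑ o, ∑ p, ∑ μ, ∑ ν,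
            g⁻¹ κ l * g⁻¹ o p * (N μ * H ![μ,κ,o]) * (N ν * H ![ν,l,p]) :=
          sum6_pair_first _
      _ = ∑ κ, ∑ l, ∑ o, ∑ p, g⁻¹ κ l * g⁻¹ o p * h ![κ,o] * h ![l,p] := by
          refine Finset.sum_congr rfl fun κ _ => Finset.sum_congr rfl fun l _ =>
            Finset.sum_congr rfl fun o _ => Finset.sum_congr rfl fun p _ => ?_
          calc (∑ μ, ∑ ν, g⁻¹ κ l * g⁻¹ o p * (N μ * H ![μ,κ,o]) * (N ν * H ![ν,l,p]))
              = (∑ μ, g⁻¹ κ l * g⁻¹ o p * (N μ * H ![μ,κ,o])) * (∑ ν, N ν * H ![ν,l,p]) :=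
                (Finset.sum_mul_sum _ _ _ _).symm
            _ = (g⁻¹ κ l * g⁻¹ o p * ∑ μ, N μ * H ![μ,κ,o]) * (∑ ν, N ν * H ![ν,l,p]) := by
                rw [← Finset.mul_sum]
            _ = g⁻¹ κ l * g⁻¹ o p * h ![κ,o] * h ![l,p] := by rw [hiH, hiH]
      _ = ∑ κ, ∑ o, ∑ l, ∑ p, g⁻¹ κ l * g⁻¹ o p * h ![κ,o] * h ![l,p] :=
          Finset.sum_congr rfl fun _ _ => Finset.sum_comm
      _ = normSq (ginvW g N) h := hQh.symm
  -- expansion of T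
  have hT : evalBilin T N N
      = ((d : ℝ) - 2)⁻¹ * ((∑ μ, N μ * ξ μ) * (∑ ν, ξ ν * N ν)
          - oneNormSq g⁻¹ ξ / 2 * evalBilin g N N)
        + c / 4 * (evalBilin (Hsq g⁻¹ H) N N - normSq g⁻¹ H / 6 * evalBilin g N N) := by
    rw [hTdef, evalBilin_add, evalBilin_smul, evalBilin_smul, evalBilin_sub, evalBilin_sub,
      evalBilin_smul, evalBilin_smul, evalBilin_vecMulVec]
  have hdne : ((d : ℝ) - 2) ≠ 0 := by
    have h3 : (3 : ℝ) ≤ (d : ℝ) := by exact_mod_cast hd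
    linarith
  rw [hT, hA, hA', hB, hHsqNN, hHnorm, hN]
  field_simp
  ring


end GEE
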